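/- arXiv:2008.06903 — 3 statements merged into one kernel-verified Lean document; each statement's English description precedes it below -/
import Mathlib

section
/- If xⁿ ∈ Q and x⁺ ∈ Q is a scheme update of xⁿ, then the discrete energy dissipation law holds: (E_N(x⁺) − E_N(xⁿ))/τ ≤ −⟨c[xⁿ] ⊙ δ, δ⟩_E ≤ 0, where δ is the node grid function δ_i = (x⁺_i − xⁿ_i)/τ and (a ⊙ b)_i = a_i b_i; in particular E_N(x⁺) ≤ E_N(xⁿ). (Theorem 4.2.) -/
open Finset Filter

noncomputable section

/-- Forward difference onto cells: `(D_h l)_{i-1/2} = (l_i - l_{i-1})/h` (use index `i`, `1 ≤ i ≤ M`). -/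
def DhOp (h : ℝ) (l : ℕ → ℝ) (i : ℕ) : ℝ := (l i - l (i - 1)) / h

/-- Difference of a cell function back onto nodes: `(d_h φ)_i = (φ_{i+1/2} - φ_{i-1/2})/h`;
a cell function `φ` is encoded by `φ i = φ_{i-1/2}`. -/
def dhOp (h : ℝ) (φ : ℕ → ℝ) (i : ℕ) : ℝ := (φ (i + 1) - φ i) / h

/-- Central difference `D̃_h` on nodes. -/
def DtOp (M : ℕ) (h : ℝ) (l : ℕ → ℝ) (i : ℕ) : ℝ :=
  if i = 0 then (l 1 - l 0) / h
  else if i = M then (l M - l (M - 1)) / h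
  else (l (i + 1) - l (i - 1)) / (2 * h)

/-- Node inner product `⟨l, g⟩_E`. -/
def ipE (M : ℕ) (h : ℝ) (l g : ℕ → ℝ) : ℝ :=
  h * (l 0 * g 0 / 2 + (∑ i ∈ Finset.Ioo 0 M, l i * g i) + l M * g M / 2)

/-- Cell inner product `⟨φ, ψ⟩_C`. -/
def ipC (M : ℕ) (h : ℝ) (φ ψ : ℕ → ℝ) : ℝ :=
  h * ∑ i ∈ Finset.Icc 1 M, φ i * ψ i

/-- The admissible (ordered) set `Q`. -/
def inQ (M : ℕ) (X0 XM : ℝ) (l : ℕ → ℝ) : Prop :=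
  l 0 = X0 ∧ l M = XM ∧ ∀ i, 1 ≤ i → i ≤ M → l (i - 1) < l i

/-- The closure `Q̄` of the admissible set. -/
def inQbar (M : ℕ) (X0 XM : ℝ) (l : ℕ → ℝ) : Prop :=
  l 0 = X0 ∧ l M = XM ∧ ∀ i, 1 ≤ i → i ≤ M → l (i - 1) ≤ l i

/-- `Ŝ[x]_i = ⟨K(x_i - y), u₀(Y)⟩_E` for a kernel `K` (e.g. `K = W_c'`);
also used as `w[x]_i` when `K = W` itself. -/
def Shat (M : ℕ) (h : ℝ) (K : ℝ → ℝ) (u0 x : ℕ → ℝ) (i : ℕ) : ℝ :=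
  ipE M h (fun j => K (x i - x j)) u0

/-- The cell function `G[x]_{i-1/2} = s·H'(s) - H(s)`, `s = u_{0,i-1/2}/(D_h x)_{i-1/2}`. -/
def Gcell (h : ℝ) (H : ℝ → ℝ) (u0half x : ℕ → ℝ) (i : ℕ) : ℝ :=
  u0half i / DhOp h x i * deriv H (u0half i / DhOp h x i) - H (u0half i / DhOp h x i)

/-- The mobility coefficient `c[x]_i = u_{0,i}² / ((D̃_h x)_i · f(u_{0,i}/(D̃_h x)_i))`. -/
def cCoef (M : ℕ) (h : ℝ) (f : ℝ → ℝ) (u0 x : ℕ → ℝ) (i : ℕ) : ℝ :=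
  u0 i ^ 2 / (DtOp M h x i * f (u0 i / DtOp M h x i))

/-- `xp` is a scheme update of `x`: the fully discrete convex-splitting scheme equations. -/
def SchemeUpdate (M : ℕ) (h τ : ℝ) (H f Vc Ve Wc We : ℝ → ℝ)
    (u0 u0half x xp : ℕ → ℝ) : Prop :=
  ∀ i, 1 ≤ i → i ≤ M - 1 →
    cCoef M h f u0 x i * (xp i - x i) / τ =
      -dhOp h (Gcell h H u0half xp) i - u0 i * deriv Vc (xp i)
        + u0 i * deriv Ve (x i)
        - u0 i * Shat M h (deriv Wc) u0 xp i + u0 i * Shat M h (deriv We) u0 x i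

/-- The discrete total energy `E_N`. -/
def EN (M : ℕ) (h : ℝ) (H V W : ℝ → ℝ) (u0 u0half x : ℕ → ℝ) : ℝ :=
  h * ∑ i ∈ Finset.Icc 1 M, H (u0half i / DhOp h x i) * DhOp h x i
    + ipE M h u0 (fun i => V (x i))
    + 1 / 2 * ipE M h u0 (fun i => Shat M h W u0 x i)

/-- The convex part `E_{N,c}` of the discrete total energy. -/
def ENc (M : ℕ) (h : ℝ) (H Vc Wc : ℝ → ℝ) (u0 u0half x : ℕ → ℝ) : ℝ :=
  h * ∑ i ∈ Finset.Icc 1 M, H (u0half i / DhOp h x i) * DhOp h x i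
    + ipE M h u0 (fun i => Vc (x i))
    + 1 / 2 * ipE M h u0 (fun i => Shat M h Wc u0 x i)

/-- The concave (subtracted convex) part `E_{N,e}` of the discrete total energy. -/
def ENe (M : ℕ) (h : ℝ) (Ve We : ℝ → ℝ) (u0 x : ℕ → ℝ) : ℝ :=
  ipE M h u0 (fun i => Ve (x i)) + 1 / 2 * ipE M h u0 (fun i => Shat M h We u0 x i)

/-- The convex functional `J` whose minimizer over `Q` is the scheme update of `xn`. -/
def Jfun (M : ℕ) (h τ : ℝ) (H f Vc Ve Wc We : ℝ → ℝ)
    (u0 u0half xn z : ℕ → ℝ) : ℝ :=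
  1 / (2 * τ) * ipE M h (fun i => cCoef M h f u0 xn i * (z i - xn i)) (fun i => z i - xn i)
    + h * ∑ i ∈ Finset.Icc 1 M, H (u0half i / DhOp h z i) * DhOp h z i
    + ipE M h u0 (fun i => Vc (z i))
    + 1 / 2 * ipE M h u0 (fun i => Shat M h Wc u0 z i)
    - ipE M h (fun i => u0 i * deriv Ve (xn i)) z
    - ipE M h (fun i => u0 i * Shat M h (deriv We) u0 xn i) z

def wt (M i : ℕ) : ℝ := if i = 0 ∨ i = M then 1/2 else 1

lemma wt_nonneg (M i : ℕ) : 0 ≤ wt M i := by unfold wt; split <;> norm_num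

lemma Icc_split (M : ℕ) (hM : 1 ≤ M) :
    Finset.Icc 0 M = insert 0 (insert M (Finset.Ioo 0 M)) := by
  ext i; simp; omega

lemma tangent_le {S : Set ℝ} {f : ℝ → ℝ} (hfc : ConvexOn ℝ S f) {x y : ℝ}
    (hx : x ∈ S) (hy : y ∈ S) (hfd : DifferentiableAt ℝ f x) :
    f x + deriv f x * (y - x) ≤ f y := by
  rcases lt_trichotomy x y with hlt | rfl | hlt
  · have h1 := hfc.deriv_le_slope hx hy hlt hfd
    rw [slope_def_field, le_div_iff₀ (by linarith)] at h1
    nlinarith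
  · simp
  · have h1 := hfc.slope_le_deriv hy hx hlt hfd
    rw [slope_def_field, div_le_iff₀ (by linarith)] at h1
    nlinarith

lemma deriv_odd {f : ℝ → ℝ} (he : ∀ s, f (-s) = f s) (s : ℝ) :
    deriv f (-s) = - deriv f s := by
  have h1 : (fun x => f (-x)) = f := funext he
  have h2 : deriv (fun x => f (-x)) s = -deriv f (-s) := deriv_comp_neg f s
  rw [h1] at h2; linarith

lemma abel_sum (M : ℕ) (hM : 1 ≤ M) (a Δ : ℕ → ℝ) :
    ∑ i ∈ Finset.Icc 1 M, a i * (Δ i - Δ (i-1))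
      = a M * Δ M - a 1 * Δ 0 + ∑ i ∈ Finset.Ioo 0 M, (a i - a (i+1)) * Δ i := by
  induction M, hM using Nat.le_induction with
  | base =>
    rw [show Finset.Ioo 0 1 = (∅:Finset ℕ) from rfl]
    simp; ring
  | succ n hn ih =>
    rw [Finset.sum_Icc_succ_top (by omega), ih,
      show Finset.Ioo 0 (n+1) = insert n (Finset.Ioo 0 n) from by ext; simp; omega,
      Finset.sum_insert (by simp)]
    simp only [Nat.add_sub_cancel]
    ring

lemma pair_sum (s : Finset ℕ) (c Δ : ℕ → ℝ) (F : ℕ → ℕ → ℝ)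
    (hF : ∀ i j, F j i = - F i j) :
    ∑ i ∈ s, ∑ j ∈ s, c i * c j * F i j * (Δ i - Δ j)
      = 2 * ∑ i ∈ s, (c i * Δ i * ∑ j ∈ s, c j * F i j) := by
  have h1 : ∑ i ∈ s, ∑ j ∈ s, c i * c j * F i j * (Δ i - Δ j)
      = (∑ i ∈ s, ∑ j ∈ s, c i * c j * F i j * Δ i)
        + ∑ i ∈ s, ∑ j ∈ s, c i * c j * F i j * (- Δ j) := by
    rw [← Finset.sum_add_distrib]
    refine Finset.sum_congr rfl fun i _ => ?_
    rw [← Finset.sum_add_distrib]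
    exact Finset.sum_congr rfl fun j _ => by ring
  have h2 : ∑ i ∈ s, ∑ j ∈ s, c i * c j * F i j * (- Δ j)
      = ∑ i ∈ s, ∑ j ∈ s, c i * c j * F i j * Δ i := by
    rw [Finset.sum_comm]
    refine Finset.sum_congr rfl fun i _ => Finset.sum_congr rfl fun j _ => ?_
    rw [hF i j]; ring
  rw [h1, h2, Finset.mul_sum]
  rw [← Finset.sum_add_distrib]
  refine Finset.sum_congr rfl fun i _ => ?_
  rw [Finset.mul_sum, Finset.mul_sum, ← Finset.sum_add_distrib]
  refine Finset.sum_congr rfl fun j _ => by ring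

lemma persp_le {H : ℝ → ℝ} (hHc : ConvexOn ℝ (Set.Ioi 0) H)
    (hHd : ∀ s : ℝ, 0 < s → DifferentiableAt ℝ H s)
    {u d d' : ℝ} (hu : 0 < u) (hd : 0 < d) (hd' : 0 < d') :
    H (u/d) * d - H (u/d') * d' ≤ (H (u/d) - u/d * deriv H (u/d)) * (d - d') := by
  have hs : (0:ℝ) < u/d := div_pos hu hd
  have hs' : (0:ℝ) < u/d' := div_pos hu hd'
  have ht := tangent_le hHc (Set.mem_Ioi.2 hs) (Set.mem_Ioi.2 hs') (hHd _ hs)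
  have ht' := mul_le_mul_of_nonneg_right ht hd'.le
  have e1 : u/d*d = u := div_mul_cancel₀ u hd.ne'
  have e2 : u/d'*d' = u := div_mul_cancel₀ u hd'.ne'
  have expand : (H (u/d) + deriv H (u/d) * (u/d' - u/d)) * d'
      = H (u/d)*d' + deriv H (u/d)*u - deriv H (u/d)*(u/d)*d' := by
    field_simp; ring
  have expand2 : (H (u/d) - u/d * deriv H (u/d))*(d-d')
      = H (u/d)*d - H (u/d)*d' - deriv H (u/d)*u + deriv H (u/d)*(u/d)*d' := by
    field_simp; ring
  linarith

lemma ipE_eq (M : ℕ) (hM : 1 ≤ M) (h : ℝ) (l g : ℕ → ℝ) :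
    ipE M h l g = h * ∑ i ∈ Finset.Icc 0 M, wt M i * (l i * g i) := by
  rw [Icc_split M hM, Finset.sum_insert (by simp; omega),
    Finset.sum_insert (by simp)]
  have hw0 : wt M 0 = 1/2 := by simp [wt]
  have hwM : wt M M = 1/2 := by simp [wt]
  have hint : ∀ i ∈ Finset.Ioo 0 M, wt M i * (l i * g i) = l i * g i := by
    intro i hi; simp at hi
    have : wt M i = 1 := by unfold wt; rw [if_neg]; omega
    rw [this, one_mul]
  rw [Finset.sum_congr rfl hint, hw0, hwM]
  unfold ipE; ring

lemma sum_Icc0M_delta (M : ℕ) (hM : 1 ≤ M) (g Δ : ℕ → ℝ)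
    (h0 : Δ 0 = 0) (hM' : Δ M = 0) :
    ∑ i ∈ Finset.Icc 0 M, wt M i * (g i * Δ i) = ∑ i ∈ Finset.Ioo 0 M, g i * Δ i := by
  rw [Icc_split M hM, Finset.sum_insert (by simp; omega), Finset.sum_insert (by simp)]
  rw [h0, hM']
  have hint : ∀ i ∈ Finset.Ioo 0 M, wt M i * (g i * Δ i) = g i * Δ i := by
    intro i hi; simp at hi
    have : wt M i = 1 := by unfold wt; rw [if_neg]; omega
    rw [this, one_mul]
  rw [Finset.sum_congr rfl hint]; ring

lemma ipE_sub_right (M : ℕ) (h : ℝ) (l g1 g2 : ℕ → ℝ) :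
    ipE M h l (fun i => g1 i - g2 i) = ipE M h l g1 - ipE M h l g2 := by
  unfold ipE
  rw [show ∀ S:ℕ→ℝ, ∑ i ∈ Finset.Ioo 0 M, l i * (g1 i - g2 i)
    = ∑ i ∈ Finset.Ioo 0 M, (l i * g1 i) - ∑ i ∈ Finset.Ioo 0 M, (l i * g2 i) from
    fun _ => by rw [← Finset.sum_sub_distrib]; exact Finset.sum_congr rfl fun i _ => by ring]
  · ring
  · exact l

lemma Shat_sub (M : ℕ) (h : ℝ) (K1 K2 : ℝ → ℝ) (u0 x : ℕ → ℝ) (i : ℕ) :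
    Shat M h (fun s => K1 s - K2 s) u0 x i = Shat M h K1 u0 x i - Shat M h K2 u0 x i := by
  unfold Shat ipE
  rw [show ∑ j ∈ Finset.Ioo 0 M, (K1 (x i - x j) - K2 (x i - x j)) * u0 j
    = ∑ j ∈ Finset.Ioo 0 M, (K1 (x i - x j) * u0 j) - ∑ j ∈ Finset.Ioo 0 M, (K2 (x i - x j) * u0 j) from
    by rw [← Finset.sum_sub_distrib]; exact Finset.sum_congr rfl fun j _ => by ring]
  ring

lemma V_step (M : ℕ) (hM : 1 ≤ M) (h : ℝ) (hh : 0 < h) (Vf : ℝ → ℝ)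
    (hVc : ConvexOn ℝ Set.univ Vf) (hVd : Differentiable ℝ Vf)
    (u0 : ℕ → ℝ) (hu0 : ∀ i ≤ M, 0 < u0 i)
    (a b : ℕ → ℝ) (hb0 : b 0 = a 0) (hbM : b M = a M) :
    ipE M h u0 (fun i => Vf (b i)) - ipE M h u0 (fun i => Vf (a i))
      ≤ ∑ i ∈ Finset.Ioo 0 M, (h * (u0 i * deriv Vf (b i))) * (b i - a i) := by
  have key : ∀ i ∈ Finset.Icc 0 M,
      wt M i * (u0 i * Vf (b i)) - wt M i * (u0 i * Vf (a i))
        ≤ wt M i * ((u0 i * deriv Vf (b i)) * (b i - a i)) := by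
    intro i hi
    simp only [Finset.mem_Icc] at hi
    have hu := hu0 i hi.2
    have ht := tangent_le hVc (Set.mem_univ (b i)) (Set.mem_univ (a i)) (hVd (b i))
    have h1 : Vf (b i) - Vf (a i) ≤ deriv Vf (b i) * (b i - a i) := by linarith
    have h2 := mul_le_mul_of_nonneg_left h1 (mul_nonneg (wt_nonneg M i) hu.le)
    nlinarith [h2]
  calc ipE M h u0 (fun i => Vf (b i)) - ipE M h u0 (fun i => Vf (a i))
      = h * ∑ i ∈ Finset.Icc 0 M,
          (wt M i * (u0 i * Vf (b i)) - wt M i * (u0 i * Vf (a i))) := by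
        rw [ipE_eq M hM, ipE_eq M hM, ← mul_sub, Finset.sum_sub_distrib]
    _ ≤ h * ∑ i ∈ Finset.Icc 0 M, wt M i * ((u0 i * deriv Vf (b i)) * (b i - a i)) :=
        mul_le_mul_of_nonneg_left (Finset.sum_le_sum key) hh.le
    _ = h * ∑ i ∈ Finset.Ioo 0 M, (u0 i * deriv Vf (b i)) * (b i - a i) := by
        rw [sum_Icc0M_delta M hM _ _ (by rw [hb0, sub_self]) (by rw [hbM, sub_self])]
    _ = ∑ i ∈ Finset.Ioo 0 M, (h * (u0 i * deriv Vf (b i))) * (b i - a i) := by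
        rw [Finset.mul_sum]; exact Finset.sum_congr rfl fun i _ => by ring

lemma W_step (M : ℕ) (hM : 1 ≤ M) (h : ℝ) (hh : 0 < h) (Wf : ℝ → ℝ)
    (hWc : ConvexOn ℝ Set.univ Wf) (hWd : Differentiable ℝ Wf)
    (hWeven : ∀ s, Wf (-s) = Wf s)
    (u0 : ℕ → ℝ) (hu0 : ∀ i ≤ M, 0 < u0 i)
    (a b : ℕ → ℝ) (hb0 : b 0 = a 0) (hbM : b M = a M) :
    1/2 * ipE M h u0 (fun i => Shat M h Wf u0 b i)
      - 1/2 * ipE M h u0 (fun i => Shat M h Wf u0 a i)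
      ≤ ∑ i ∈ Finset.Ioo 0 M, (h * (u0 i * Shat M h (deriv Wf) u0 b i)) * (b i - a i) := by
  have hShat : ∀ (K : ℝ → ℝ) (x : ℕ → ℝ) (i : ℕ),
      Shat M h K u0 x i = h * ∑ j ∈ Finset.Icc 0 M, wt M j * (K (x i - x j) * u0 j) :=
    fun K x i => ipE_eq M hM h _ u0
  have hip : ∀ (K : ℝ → ℝ) (x : ℕ → ℝ),
      ipE M h u0 (fun i => Shat M h K u0 x i)
        = h * h * ∑ i ∈ Finset.Icc 0 M, ∑ j ∈ Finset.Icc 0 M,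
            (wt M i * u0 i) * (wt M j * u0 j) * K (x i - x j) := by
    intro K x
    rw [ipE_eq M hM]
    simp only [Finset.mul_sum]
    refine Finset.sum_congr rfl fun i _ => ?_
    rw [hShat K x i]
    simp only [Finset.mul_sum]
    exact Finset.sum_congr rfl fun j _ => by ring
  have hF : ∀ i j : ℕ, deriv Wf (b j - b i) = - deriv Wf (b i - b j) := by
    intro i j
    rw [show b j - b i = -(b i - b j) by ring, deriv_odd hWeven]
  have step1 : ∑ i ∈ Finset.Icc 0 M, ∑ j ∈ Finset.Icc 0 M,
        (wt M i * u0 i) * (wt M j * u0 j) * Wf (b i - b j)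
      - ∑ i ∈ Finset.Icc 0 M, ∑ j ∈ Finset.Icc 0 M,
        (wt M i * u0 i) * (wt M j * u0 j) * Wf (a i - a j)
      ≤ ∑ i ∈ Finset.Icc 0 M, ∑ j ∈ Finset.Icc 0 M,
        (wt M i * u0 i) * (wt M j * u0 j) * deriv Wf (b i - b j)
          * ((b i - a i) - (b j - a j)) := by
    rw [← Finset.sum_sub_distrib]
    refine Finset.sum_le_sum fun i hi => ?_
    rw [← Finset.sum_sub_distrib]
    refine Finset.sum_le_sum fun j hj => ?_
    simp only [Finset.mem_Icc] at hi hj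
    have ht := tangent_le hWc (Set.mem_univ (b i - b j)) (Set.mem_univ (a i - a j))
      (hWd (b i - b j))
    have h1 : Wf (b i - b j) - Wf (a i - a j)
        ≤ deriv Wf (b i - b j) * ((b i - a i) - (b j - a j)) := by nlinarith [ht]
    have hcc : 0 ≤ (wt M i * u0 i) * (wt M j * u0 j) :=
      mul_nonneg (mul_nonneg (wt_nonneg M i) (hu0 i hi.2).le)
        (mul_nonneg (wt_nonneg M j) (hu0 j hj.2).le)
    nlinarith [mul_le_mul_of_nonneg_left h1 hcc]
  have step2 := pair_sum (Finset.Icc 0 M) (fun i => wt M i * u0 i)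
    (fun i => b i - a i) (fun i j => deriv Wf (b i - b j)) hF
  calc 1/2 * ipE M h u0 (fun i => Shat M h Wf u0 b i)
        - 1/2 * ipE M h u0 (fun i => Shat M h Wf u0 a i)
      = h * h / 2 * (∑ i ∈ Finset.Icc 0 M, ∑ j ∈ Finset.Icc 0 M,
            (wt M i * u0 i) * (wt M j * u0 j) * Wf (b i - b j)
          - ∑ i ∈ Finset.Icc 0 M, ∑ j ∈ Finset.Icc 0 M,
            (wt M i * u0 i) * (wt M j * u0 j) * Wf (a i - a j)) := by
        rw [hip Wf b, hip Wf a]; ring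
    _ ≤ h * h / 2 * ∑ i ∈ Finset.Icc 0 M, ∑ j ∈ Finset.Icc 0 M,
          (wt M i * u0 i) * (wt M j * u0 j) * deriv Wf (b i - b j)
            * ((b i - a i) - (b j - a j)) := by
        refine mul_le_mul_of_nonneg_left ?_ (by positivity)
        exact step1
    _ = h * h * ∑ i ∈ Finset.Icc 0 M, ((wt M i * u0 i) * (b i - a i)
          * ∑ j ∈ Finset.Icc 0 M, (wt M j * u0 j) * deriv Wf (b i - b j)) := by
        rw [show ∑ i ∈ Finset.Icc 0 M, ∑ j ∈ Finset.Icc 0 M,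
          (wt M i * u0 i) * (wt M j * u0 j) * deriv Wf (b i - b j)
            * ((b i - a i) - (b j - a j))
          = ∑ i ∈ Finset.Icc 0 M, ∑ j ∈ Finset.Icc 0 M,
            (fun i => wt M i * u0 i) i * (fun i => wt M i * u0 i) j
              * (fun i j => deriv Wf (b i - b j)) i j
              * ((fun i => b i - a i) i - (fun i => b i - a i) j) from rfl, step2]
        ring
    _ = h * ∑ i ∈ Finset.Icc 0 M, wt M i * ((u0 i * Shat M h (deriv Wf) u0 b i)
          * (b i - a i)) := by
        simp only [Finset.mul_sum]
        refine Finset.sum_congr rfl fun i _ => ?_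
        rw [hShat (deriv Wf) b i]
        simp only [Finset.mul_sum, Finset.sum_mul]
        exact Finset.sum_congr rfl fun j _ => by ring
    _ = h * ∑ i ∈ Finset.Ioo 0 M, (u0 i * Shat M h (deriv Wf) u0 b i) * (b i - a i) := by
        rw [sum_Icc0M_delta M hM _ _ (by rw [hb0, sub_self]) (by rw [hbM, sub_self])]
    _ = ∑ i ∈ Finset.Ioo 0 M, (h * (u0 i * Shat M h (deriv Wf) u0 b i)) * (b i - a i) := by
        rw [Finset.mul_sum]; exact Finset.sum_congr rfl fun i _ => by ring

lemma H_step (M : ℕ) (hM : 1 ≤ M) (h : ℝ) (hh : 0 < h) (H : ℝ → ℝ)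
    (hHc : ConvexOn ℝ (Set.Ioi 0) H) (hHd : ∀ s : ℝ, 0 < s → DifferentiableAt ℝ H s)
    (u0half : ℕ → ℝ) (hu : ∀ i, 1 ≤ i → i ≤ M → 0 < u0half i)
    (a b : ℕ → ℝ) (hb0 : b 0 = a 0) (hbM : b M = a M)
    (hamono : ∀ i, 1 ≤ i → i ≤ M → a (i-1) < a i)
    (hbmono : ∀ i, 1 ≤ i → i ≤ M → b (i-1) < b i) :
    h * ∑ i ∈ Finset.Icc 1 M, H (u0half i / DhOp h b i) * DhOp h b i
      - h * ∑ i ∈ Finset.Icc 1 M, H (u0half i / DhOp h a i) * DhOp h a i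
      ≤ ∑ i ∈ Finset.Ioo 0 M, (h * dhOp h (Gcell h H u0half b) i) * (b i - a i) := by
  have key : ∀ i ∈ Finset.Icc 1 M,
      H (u0half i / DhOp h b i) * DhOp h b i - H (u0half i / DhOp h a i) * DhOp h a i
        ≤ (- Gcell h H u0half b i) * (DhOp h b i - DhOp h a i) := by
    intro i hi
    simp only [Finset.mem_Icc] at hi
    have hdb : 0 < DhOp h b i := div_pos (sub_pos.2 (hbmono i hi.1 hi.2)) hh
    have hda : 0 < DhOp h a i := div_pos (sub_pos.2 (hamono i hi.1 hi.2)) hh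
    have := persp_le hHc hHd (hu i hi.1 hi.2) hdb hda
    unfold Gcell
    linarith [this]
  calc h * ∑ i ∈ Finset.Icc 1 M, H (u0half i / DhOp h b i) * DhOp h b i
        - h * ∑ i ∈ Finset.Icc 1 M, H (u0half i / DhOp h a i) * DhOp h a i
      = h * ∑ i ∈ Finset.Icc 1 M,
          (H (u0half i / DhOp h b i) * DhOp h b i
            - H (u0half i / DhOp h a i) * DhOp h a i) := by
        rw [← mul_sub, Finset.sum_sub_distrib]
    _ ≤ h * ∑ i ∈ Finset.Icc 1 M,
          (- Gcell h H u0half b i) * (DhOp h b i - DhOp h a i) :=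
        mul_le_mul_of_nonneg_left (Finset.sum_le_sum key) hh.le
    _ = ∑ i ∈ Finset.Icc 1 M, (- Gcell h H u0half b i)
          * ((b i - a i) - (b (i-1) - a (i-1))) := by
        rw [Finset.mul_sum]
        refine Finset.sum_congr rfl fun i _ => ?_
        unfold DhOp
        field_simp
        ring
    _ = (- Gcell h H u0half b M) * (b M - a M) - (- Gcell h H u0half b 1) * (b 0 - a 0)
          + ∑ i ∈ Finset.Ioo 0 M, ((- Gcell h H u0half b i) - (- Gcell h H u0half b (i+1)))
              * (b i - a i) :=
        abel_sum M hM _ _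
    _ = ∑ i ∈ Finset.Ioo 0 M, (h * dhOp h (Gcell h H u0half b) i) * (b i - a i) := by
        rw [hbM, hb0, sub_self, sub_self, mul_zero, mul_zero, sub_zero, zero_add]
        refine Finset.sum_congr rfl fun i _ => ?_
        rw [show h * dhOp h (Gcell h H u0half b) i
            = Gcell h H u0half b (i+1) - Gcell h H u0half b i from by
          unfold dhOp; field_simp]
        ring

/-- **Theorem 4.2** (discrete energy dissipation law). -/
theorem discrete_energy_dissipation
    (M : ℕ) (hM : 2 ≤ M) (X0 XM : ℝ) (hX : X0 < XM)
    (h : ℝ) (hh : h = (XM - X0) / (M : ℝ)) (τ : ℝ) (hτ : 0 < τ)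
    (H f Vc Ve Wc We : ℝ → ℝ)
    (hHconv : ConvexOn ℝ (Set.Ioi 0) H) (hHreg : ContDiffOn ℝ 1 H (Set.Ioi 0))
    (hf : ∀ s : ℝ, 0 < s → 0 < f s)
    (hVcconv : ConvexOn ℝ Set.univ Vc) (hVcreg : ContDiff ℝ 1 Vc)
    (hVeconv : ConvexOn ℝ Set.univ Ve) (hVereg : ContDiff ℝ 1 Ve)
    (hWcconv : ConvexOn ℝ Set.univ Wc) (hWcreg : ContDiff ℝ 1 Wc)
    (hWeconv : ConvexOn ℝ Set.univ We) (hWereg : ContDiff ℝ 1 We)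
    (hWceven : ∀ s : ℝ, Wc (-s) = Wc s) (hWeeven : ∀ s : ℝ, We (-s) = We s)
    (u0 u0half : ℕ → ℝ)
    (hu0 : ∀ i ≤ M, 0 < u0 i)
    (hu0half : ∀ i, 1 ≤ i → i ≤ M → 0 < u0half i)
    (xn xp : ℕ → ℝ) (hxn : inQ M X0 XM xn) (hxp : inQ M X0 XM xp)
    (hsch : SchemeUpdate M h τ H f Vc Ve Wc We u0 u0half xn xp) :
    ((EN M h H (fun s => Vc s - Ve s) (fun s => Wc s - We s) u0 u0half xp
        - EN M h H (fun s => Vc s - Ve s) (fun s => Wc s - We s) u0 u0half xn) / τ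
      ≤ -ipE M h (fun i => cCoef M h f u0 xn i * ((xp i - xn i) / τ))
          (fun i => (xp i - xn i) / τ))
    ∧ (-ipE M h (fun i => cCoef M h f u0 xn i * ((xp i - xn i) / τ))
          (fun i => (xp i - xn i) / τ) ≤ 0)
    ∧ EN M h H (fun s => Vc s - Ve s) (fun s => Wc s - We s) u0 u0half xp
        ≤ EN M h H (fun s => Vc s - Ve s) (fun s => Wc s - We s) u0 u0half xn := by
  have hM1 : 1 ≤ M := by omega
  have hMpos : (0:ℝ) < (M:ℝ) := by exact_mod_cast (by omega : 0 < M)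
  have hh0 : 0 < h := by rw [hh]; exact div_pos (by linarith) hMpos
  obtain ⟨hxn0, hxnM, hxnm⟩ := hxn
  obtain ⟨hxp0, hxpM, hxpm⟩ := hxp
  have hb0 : xp 0 = xn 0 := by rw [hxp0, hxn0]
  have hbM : xp M = xn M := by rw [hxpM, hxnM]
  have hVcd : Differentiable ℝ Vc := hVcreg.differentiable one_ne_zero
  have hVed : Differentiable ℝ Ve := hVereg.differentiable one_ne_zero
  have hWcd : Differentiable ℝ Wc := hWcreg.differentiable one_ne_zero
  have hWed : Differentiable ℝ We := hWereg.differentiable one_ne_zero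
  have hHd : ∀ s : ℝ, 0 < s → DifferentiableAt ℝ H s := fun s hs =>
    ((hHreg.differentiableOn one_ne_zero) s hs).differentiableAt (Ioi_mem_nhds hs)
  -- nonnegativity of the mobility coefficients
  have hcnn : ∀ i ∈ Finset.Ioo 0 M, 0 ≤ cCoef M h f u0 xn i := by
    intro i hi
    simp only [Finset.mem_Ioo] at hi
    have hD : 0 < DtOp M h xn i := by
      unfold DtOp
      rw [if_neg (by omega), if_neg (by omega)]
      apply div_pos
      · have h1 := hxnm i (by omega) (by omega)
        have h2 := hxnm (i+1) (by omega) (by omega)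
        rw [Nat.add_sub_cancel] at h2
        linarith
      · linarith
    have hu := hu0 i hi.2.le
    have hfpos := hf _ (div_pos hu hD)
    unfold cCoef
    exact le_of_lt (div_pos (pow_pos hu 2) (mul_pos hD hfpos))
  -- evaluating the right-hand side inner product
  have z0 : (xp 0 - xn 0) / τ = 0 := by rw [hb0, sub_self, zero_div]
  have zM : (xp M - xn M) / τ = 0 := by rw [hbM, sub_self, zero_div]
  have hRHS : ipE M h (fun i => cCoef M h f u0 xn i * ((xp i - xn i) / τ))
      (fun i => (xp i - xn i) / τ)
      = h * ∑ i ∈ Finset.Ioo 0 M,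
          cCoef M h f u0 xn i * ((xp i - xn i) / τ) * ((xp i - xn i) / τ) := by
    unfold ipE
    simp only [z0, zM]
    ring
  -- part 2
  have part2 : -ipE M h (fun i => cCoef M h f u0 xn i * ((xp i - xn i) / τ))
      (fun i => (xp i - xn i) / τ) ≤ 0 := by
    rw [hRHS]
    rw [neg_nonpos]
    apply mul_nonneg hh0.le
    apply Finset.sum_nonneg
    intro i hi
    have h1 := hcnn i hi
    nlinarith [mul_self_nonneg ((xp i - xn i) / τ)]
  -- the five convexity estimates
  have S_H := H_step M hM1 h hh0 H hHconv hHd u0half hu0half xn xp hb0 hbM hxnm hxpm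
  have S_Vc := V_step M hM1 h hh0 Vc hVcconv hVcd u0 hu0 xn xp hb0 hbM
  have S_Ve := V_step M hM1 h hh0 Ve hVeconv hVed u0 hu0 xp xn hb0.symm hbM.symm
  have S_Wc := W_step M hM1 h hh0 Wc hWcconv hWcd hWceven u0 hu0 xn xp hb0 hbM
  have S_We := W_step M hM1 h hh0 We hWeconv hWed hWeeven u0 hu0 xp xn hb0.symm hbM.symm
  -- splitting the energy
  have ENsplit : ∀ x : ℕ → ℝ,
      EN M h H (fun s => Vc s - Ve s) (fun s => Wc s - We s) u0 u0half x
        = (h * ∑ i ∈ Finset.Icc 1 M, H (u0half i / DhOp h x i) * DhOp h x i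
            + ipE M h u0 (fun i => Vc (x i))
            + 1/2 * ipE M h u0 (fun i => Shat M h Wc u0 x i))
          - (ipE M h u0 (fun i => Ve (x i))
            + 1/2 * ipE M h u0 (fun i => Shat M h We u0 x i)) := by
    intro x
    unfold EN
    rw [show (fun i => Vc (x i) - Ve (x i)) = fun i => (fun j => Vc (x j)) i - (fun j => Ve (x j)) i from rfl]
    rw [ipE_sub_right]
    rw [show (fun i => Shat M h (fun s => Wc s - We s) u0 x i)
      = fun i => (fun j => Shat M h Wc u0 x j) i - (fun j => Shat M h We u0 x j) i from
      funext fun i => Shat_sub M h Wc We u0 x i]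
    rw [ipE_sub_right]
    ring
  -- identify the sum using the scheme equations
  have final_eq : ∀ i ∈ Finset.Ioo 0 M,
      (h * dhOp h (Gcell h H u0half xp) i) * (xp i - xn i)
        + (h * (u0 i * deriv Vc (xp i))) * (xp i - xn i)
        + (h * (u0 i * Shat M h (deriv Wc) u0 xp i)) * (xp i - xn i)
        + (h * (u0 i * deriv Ve (xn i))) * (xn i - xp i)
        + (h * (u0 i * Shat M h (deriv We) u0 xn i)) * (xn i - xp i)
      = -(h * (cCoef M h f u0 xn i * (xp i - xn i) ^ 2) / τ) := by
    intro i hi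
    simp only [Finset.mem_Ioo] at hi
    have hs := hsch i (by omega) (by omega)
    linear_combination (h * (xp i - xn i)) * hs
  have sum5 : ∑ i ∈ Finset.Ioo 0 M, (h * dhOp h (Gcell h H u0half xp) i) * (xp i - xn i)
        + ∑ i ∈ Finset.Ioo 0 M, (h * (u0 i * deriv Vc (xp i))) * (xp i - xn i)
        + ∑ i ∈ Finset.Ioo 0 M, (h * (u0 i * Shat M h (deriv Wc) u0 xp i)) * (xp i - xn i)
        + ∑ i ∈ Finset.Ioo 0 M, (h * (u0 i * deriv Ve (xn i))) * (xn i - xp i)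
        + ∑ i ∈ Finset.Ioo 0 M, (h * (u0 i * Shat M h (deriv We) u0 xn i)) * (xn i - xp i)
      = ∑ i ∈ Finset.Ioo 0 M, -(h * (cCoef M h f u0 xn i * (xp i - xn i) ^ 2) / τ) := by
    rw [← Finset.sum_add_distrib, ← Finset.sum_add_distrib, ← Finset.sum_add_distrib,
      ← Finset.sum_add_distrib]
    exact Finset.sum_congr rfl final_eq
  have combine : EN M h H (fun s => Vc s - Ve s) (fun s => Wc s - We s) u0 u0half xp
      - EN M h H (fun s => Vc s - Ve s) (fun s => Wc s - We s) u0 u0half xn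
      ≤ ∑ i ∈ Finset.Ioo 0 M, -(h * (cCoef M h f u0 xn i * (xp i - xn i) ^ 2) / τ) := by
    rw [ENsplit xp, ENsplit xn, ← sum5]
    linarith [S_H, S_Vc, S_Ve, S_Wc, S_We]
  have sumid : ∑ i ∈ Finset.Ioo 0 M, -(h * (cCoef M h f u0 xn i * (xp i - xn i) ^ 2) / τ)
      = -(τ * (h * ∑ i ∈ Finset.Ioo 0 M,
          cCoef M h f u0 xn i * ((xp i - xn i) / τ) * ((xp i - xn i) / τ))) := by
    rw [show -(τ * (h * ∑ i ∈ Finset.Ioo 0 M,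
        cCoef M h f u0 xn i * ((xp i - xn i) / τ) * ((xp i - xn i) / τ)))
      = ∑ i ∈ Finset.Ioo 0 M,
          -(τ * (h * (cCoef M h f u0 xn i * ((xp i - xn i) / τ) * ((xp i - xn i) / τ)))) from by
      rw [Finset.mul_sum, Finset.mul_sum, ← Finset.sum_neg_distrib]]
    refine Finset.sum_congr rfl fun i _ => ?_
    field_simp
  have part1 : (EN M h H (fun s => Vc s - Ve s) (fun s => Wc s - We s) u0 u0half xp
        - EN M h H (fun s => Vc s - Ve s) (fun s => Wc s - We s) u0 u0half xn) / τ
      ≤ -ipE M h (fun i => cCoef M h f u0 xn i * ((xp i - xn i) / τ))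
          (fun i => (xp i - xn i) / τ) := by
    rw [hRHS, div_le_iff₀ hτ]
    rw [sumid] at combine
    linarith
  refine ⟨part1, part2, ?_⟩
  have h3 := le_trans part1 part2
  rw [div_le_iff₀ hτ, zero_mul] at h3
  linarith
end
end

section
/- Let (xⁿ)_{n≥0} ⊆ Q be such that xⁿ⁺¹ is a scheme update of xⁿ for every n ≥ 0, and suppose xⁿ converges componentwise to some x^∞ ∈ Q (i.e. x^∞ is strictly increasing with x^∞₀ = X₀ and x^∞_M = X_M). Assume f, H′, V_c′, V_e′, W_c′, W_e′ are continuous. Then x^∞ solves the discrete steady-state boundary value problem: for every 1 ≤ i ≤ M−1, −(d_h G[x^∞])_i − u_{0,i}(V_c′ − V_e′)(x^∞_i) − u_{0,i}(Ŝ_c[x^∞]_i − Ŝ_e[x^∞]_i) = 0, together with x^∞₀ = X₀ and x^∞_M = X_M; i.e., the scheme is steady-state preserving. (Part of Theorem 4.4.) -/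
open Finset Filter

noncomputable section

/-- Part of **Theorem 4.4** (steady-state preserving): a componentwise limit `x^∞ ∈ Q` of
scheme iterates solves the discrete steady-state boundary value problem. -/
theorem steady_state_preserving
    (M : ℕ) (hM : 2 ≤ M) (X0 XM : ℝ) (hX : X0 < XM)
    (h : ℝ) (hh : h = (XM - X0) / (M : ℝ)) (τ : ℝ) (hτ : 0 < τ)
    (H f Vc Ve Wc We : ℝ → ℝ)
    (hHconv : ConvexOn ℝ (Set.Ioi 0) H) (hHreg : ContDiffOn ℝ 1 H (Set.Ioi 0))
    (hf : ∀ s : ℝ, 0 < s → 0 < f s)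
    (hVcconv : ConvexOn ℝ Set.univ Vc) (hVcreg : ContDiff ℝ 1 Vc)
    (hVeconv : ConvexOn ℝ Set.univ Ve) (hVereg : ContDiff ℝ 1 Ve)
    (hWcconv : ConvexOn ℝ Set.univ Wc) (hWcreg : ContDiff ℝ 1 Wc)
    (hWeconv : ConvexOn ℝ Set.univ We) (hWereg : ContDiff ℝ 1 We)
    (hWceven : ∀ s : ℝ, Wc (-s) = Wc s) (hWeeven : ∀ s : ℝ, We (-s) = We s)
    (u0 u0half : ℕ → ℝ)
    (hu0 : ∀ i ≤ M, 0 < u0 i)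
    (hu0half : ∀ i, 1 ≤ i → i ≤ M → 0 < u0half i)
    (hfc : ContinuousOn f (Set.Ioi 0)) (hH'c : ContinuousOn (deriv H) (Set.Ioi 0))
    (hVc'c : Continuous (deriv Vc)) (hVe'c : Continuous (deriv Ve))
    (hWc'c : Continuous (deriv Wc)) (hWe'c : Continuous (deriv We))
    (x : ℕ → ℕ → ℝ) (hxQ : ∀ n, inQ M X0 XM (x n))
    (hupd : ∀ n, SchemeUpdate M h τ H f Vc Ve Wc We u0 u0half (x n) (x (n + 1)))
    (xinf : ℕ → ℝ) (hxinf : inQ M X0 XM xinf)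
    (hconv : ∀ i ≤ M, Tendsto (fun n => x n i) atTop (nhds (xinf i))) :
    (∀ i, 1 ≤ i → i ≤ M - 1 →
      -dhOp h (Gcell h H u0half xinf) i
        - u0 i * (deriv Vc (xinf i) - deriv Ve (xinf i))
        - u0 i * (Shat M h (deriv Wc) u0 xinf i - Shat M h (deriv We) u0 xinf i) = 0)
    ∧ xinf 0 = X0 ∧ xinf M = XM := by
  refine ⟨?_, hxinf.1, hxinf.2.1⟩
  intro i hi1 hiM
  have hMpos : 0 < M := by omega
  have hhpos : 0 < h := by
    rw [hh]
    exact div_pos (sub_pos.mpr hX) (by exact_mod_cast hMpos)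
  have hiM' : i + 1 ≤ M := by omega
  have hi0 : i ≠ 0 := by omega
  have hiMne : i ≠ M := by omega
  -- positivity of forward differences at the limit
  have hDh : ∀ k, 1 ≤ k → k ≤ M → 0 < DhOp h xinf k := by
    intro k hk1 hk2
    exact div_pos (sub_pos.mpr (hxinf.2.2 k hk1 hk2)) hhpos
  -- shifted convergence
  have hconv' : ∀ j ≤ M, Tendsto (fun n => x (n + 1) j) atTop (nhds (xinf j)) :=
    fun j hj => (hconv j hj).comp (tendsto_add_atTop_nat 1)
  -- convergence of Gcell at admissible indices
  have hG : ∀ k, 1 ≤ k → k ≤ M →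
      Tendsto (fun n => Gcell h H u0half (x (n + 1)) k) atTop
        (nhds (Gcell h H u0half xinf k)) := by
    intro k hk1 hk2
    have hk1' : k - 1 ≤ M := by omega
    have hDhT : Tendsto (fun n => DhOp h (x (n + 1)) k) atTop (nhds (DhOp h xinf k)) :=
      ((hconv' k hk2).sub (hconv' (k - 1) hk1')).div_const h
    have hsT : Tendsto (fun n => u0half k / DhOp h (x (n + 1)) k) atTop
        (nhds (u0half k / DhOp h xinf k)) :=
      tendsto_const_nhds.div hDhT (ne_of_gt (hDh k hk1 hk2))
    have hspos : 0 < u0half k / DhOp h xinf k :=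
      div_pos (hu0half k hk1 hk2) (hDh k hk1 hk2)
    have hHat : ContinuousAt H (u0half k / DhOp h xinf k) :=
      (hHreg.continuousOn.continuousAt (isOpen_Ioi.mem_nhds hspos))
    have hH'at : ContinuousAt (deriv H) (u0half k / DhOp h xinf k) :=
      (hH'c.continuousAt (isOpen_Ioi.mem_nhds hspos))
    simp only [Gcell]
    exact (hsT.mul (hH'at.tendsto.comp hsT)).sub (hHat.tendsto.comp hsT)
  -- convergence of Shat for a continuous kernel
  have hShat : ∀ (K : ℝ → ℝ), Continuous K → ∀ (y : ℕ → ℕ → ℝ),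
      (∀ j ≤ M, Tendsto (fun n => y n j) atTop (nhds (xinf j))) →
      Tendsto (fun n => Shat M h K u0 (y n) i) atTop (nhds (Shat M h K u0 xinf i)) := by
    intro K hK y hy
    have hterm : ∀ j ≤ M, Tendsto (fun n => K (y n i - y n j)) atTop
        (nhds (K (xinf i - xinf j))) :=
      fun j hj => (hK.tendsto _).comp ((hy i (by omega)).sub (hy j hj))
    simp only [Shat, ipE]
    refine Tendsto.const_mul _ ?_
    refine Tendsto.add (Tendsto.add ?_ ?_) ?_
    · exact ((hterm 0 (by omega)).mul_const _).div_const 2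
    · exact tendsto_finset_sum _ fun j hj =>
        (hterm j (le_of_lt (Finset.mem_Ioo.mp hj).2)).mul_const _
    · exact ((hterm M le_rfl).mul_const _).div_const 2
  -- convergence of the mobility coefficient
  have hDt : Tendsto (fun n => DtOp M h (x n) i) atTop (nhds (DtOp M h xinf i)) := by
    simp only [DtOp, if_neg hi0, if_neg hiMne]
    exact ((hconv (i + 1) hiM').sub (hconv (i - 1) (by omega))).div_const (2 * h)
  have hDtpos : 0 < DtOp M h xinf i := by
    simp only [DtOp, if_neg hi0, if_neg hiMne]
    have h1 : xinf (i - 1) < xinf i := hxinf.2.2 i hi1 (by omega)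
    have h2 : xinf i < xinf (i + 1) := by
      have := hxinf.2.2 (i + 1) (by omega) hiM'
      simpa using this
    exact div_pos (by linarith) (by linarith)
  have hu0i : 0 < u0 i := hu0 i (by omega)
  have hargpos : 0 < u0 i / DtOp M h xinf i := div_pos hu0i hDtpos
  have hfpos : 0 < f (u0 i / DtOp M h xinf i) := hf _ hargpos
  have hargT : Tendsto (fun n => u0 i / DtOp M h (x n) i) atTop
      (nhds (u0 i / DtOp M h xinf i)) :=
    tendsto_const_nhds.div hDt (ne_of_gt hDtpos)
  have hfT : Tendsto (fun n => f (u0 i / DtOp M h (x n) i)) atTop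
      (nhds (f (u0 i / DtOp M h xinf i))) :=
    (hfc.continuousAt (isOpen_Ioi.mem_nhds hargpos)).tendsto.comp hargT
  have hcT : Tendsto (fun n => cCoef M h f u0 (x n) i) atTop
      (nhds (cCoef M h f u0 xinf i)) := by
    simp only [cCoef]
    exact tendsto_const_nhds.div (hDt.mul hfT)
      (ne_of_gt (mul_pos hDtpos hfpos))
  -- LHS tends to 0
  have hLHS : Tendsto (fun n => cCoef M h f u0 (x n) i * (x (n + 1) i - x n i) / τ)
      atTop (nhds 0) := by
    have : Tendsto (fun n => cCoef M h f u0 (x n) i * (x (n + 1) i - x n i) / τ)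
        atTop (nhds (cCoef M h f u0 xinf i * (xinf i - xinf i) / τ)) :=
      (hcT.mul ((hconv' i (by omega)).sub (hconv i (by omega)))).div_const τ
    simpa using this
  -- RHS tends to the steady-state expression
  set E := -dhOp h (Gcell h H u0half xinf) i - u0 i * deriv Vc (xinf i)
      + u0 i * deriv Ve (xinf i)
      - u0 i * Shat M h (deriv Wc) u0 xinf i + u0 i * Shat M h (deriv We) u0 xinf i with hE
  have hRHS : Tendsto (fun n =>
      -dhOp h (Gcell h H u0half (x (n + 1))) i - u0 i * deriv Vc (x (n + 1) i)
        + u0 i * deriv Ve (x n i)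
        - u0 i * Shat M h (deriv Wc) u0 (x (n + 1)) i
        + u0 i * Shat M h (deriv We) u0 (x n) i) atTop (nhds E) := by
    have hdh : Tendsto (fun n => dhOp h (Gcell h H u0half (x (n + 1))) i) atTop
        (nhds (dhOp h (Gcell h H u0half xinf) i)) := by
      simp only [dhOp]
      exact ((hG (i + 1) (by omega) hiM').sub (hG i hi1 (by omega))).div_const h
    have h1 : Tendsto (fun n => deriv Vc (x (n + 1) i)) atTop
        (nhds (deriv Vc (xinf i))) :=
      (hVc'c.tendsto _).comp (hconv' i (by omega))
    have h2 : Tendsto (fun n => deriv Ve (x n i)) atTop (nhds (deriv Ve (xinf i))) :=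
      (hVe'c.tendsto _).comp (hconv i (by omega))
    have h3 := hShat (deriv Wc) hWc'c (fun n => x (n + 1)) hconv'
    have h4 := hShat (deriv We) hWe'c x hconv
    exact ((((hdh.neg.sub (h1.const_mul _)).add (h2.const_mul _)).sub
      (h3.const_mul _)).add (h4.const_mul _))
  have heq : (fun n => cCoef M h f u0 (x n) i * (x (n + 1) i - x n i) / τ) =
      (fun n => -dhOp h (Gcell h H u0half (x (n + 1))) i - u0 i * deriv Vc (x (n + 1) i)
        + u0 i * deriv Ve (x n i)
        - u0 i * Shat M h (deriv Wc) u0 (x (n + 1)) i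
        + u0 i * Shat M h (deriv We) u0 (x n) i) :=
    funext fun n => hupd n i hi1 hiM
  rw [heq] at hLHS
  have hE0 : E = 0 := tendsto_nhds_unique hRHS hLHS
  rw [hE] at hE0
  linarith [hE0]
end
end

section
/- For every xⁿ ∈ Q, the functional J is convex on the convex set Q: for all z, w ∈ Q and θ ∈ [0,1], J(θz + (1−θ)w) ≤ θ·J(z) + (1−θ)·J(w); moreover J is strictly convex on Q, i.e. the inequality is strict whenever z ≠ w and θ ∈ (0,1). -/
open Finset Filter

noncomputable section

def Pfun (M : ℕ) (h : ℝ) (F : ℕ → ℝ) : ℝ :=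
  h * (F 0 / 2 + (∑ i ∈ Finset.Ioo 0 M, F i) + F M / 2)

lemma Pfun_congr (M : ℕ) (h : ℝ) (F G : ℕ → ℝ) (hpt : ∀ i ≤ M, F i = G i) :
    Pfun M h F = Pfun M h G := by
  unfold Pfun
  rw [hpt 0 (Nat.zero_le M), hpt M le_rfl,
    Finset.sum_congr rfl (fun i hi => hpt i (le_of_lt (Finset.mem_Ioo.mp hi).2))]

lemma Pfun_combo3 (M : ℕ) (h : ℝ) (a b c : ℝ) (F G K : ℕ → ℝ) :
    Pfun M h (fun i => a * F i + b * G i + c * K i)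
      = a * Pfun M h F + b * Pfun M h G + c * Pfun M h K := by
  unfold Pfun
  rw [Finset.sum_add_distrib, Finset.sum_add_distrib, ← Finset.mul_sum, ← Finset.mul_sum,
    ← Finset.mul_sum]
  ring

lemma Pfun_combo (M : ℕ) (h : ℝ) (a b : ℝ) (F G : ℕ → ℝ) :
    Pfun M h (fun i => a * F i + b * G i) = a * Pfun M h F + b * Pfun M h G := by
  have := Pfun_combo3 M h a b 0 F G (fun _ => 0)
  simpa using this

lemma Pfun_le (M : ℕ) (h : ℝ) (hh : 0 ≤ h) (F G : ℕ → ℝ) (hpt : ∀ i ≤ M, F i ≤ G i) :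
    Pfun M h F ≤ Pfun M h G := by
  unfold Pfun
  apply mul_le_mul_of_nonneg_left _ hh
  have hs : ∑ i ∈ Finset.Ioo 0 M, F i ≤ ∑ i ∈ Finset.Ioo 0 M, G i :=
    Finset.sum_le_sum (fun i hi => hpt i (le_of_lt (Finset.mem_Ioo.mp hi).2))
  have h0 := hpt 0 (Nat.zero_le M)
  have hM := hpt M le_rfl
  linarith

lemma Pfun_lt (M : ℕ) (h : ℝ) (hh : 0 < h) (F G : ℕ → ℝ) (hpt : ∀ i ≤ M, F i ≤ G i)
    (k : ℕ) (hk : k ∈ Finset.Ioo 0 M) (hlt : F k < G k) :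
    Pfun M h F < Pfun M h G := by
  unfold Pfun
  apply mul_lt_mul_of_pos_left _ hh
  have hs : ∑ i ∈ Finset.Ioo 0 M, F i < ∑ i ∈ Finset.Ioo 0 M, G i :=
    Finset.sum_lt_sum (fun i hi => hpt i (le_of_lt (Finset.mem_Ioo.mp hi).2)) ⟨k, hk, hlt⟩
  have h0 := hpt 0 (Nat.zero_le M)
  have hM := hpt M le_rfl
  linarith

lemma Pfun_zero (M : ℕ) (h : ℝ) : Pfun M h (fun _ => 0) = 0 := by simp [Pfun]

lemma sum_combo (s : Finset ℕ) (a b h : ℝ) (F G : ℕ → ℝ) :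
    h * ∑ i ∈ s, (a * F i + b * G i) = a * (h * ∑ i ∈ s, F i) + b * (h * ∑ i ∈ s, G i) := by
  rw [Finset.sum_add_distrib, ← Finset.mul_sum, ← Finset.mul_sum]
  ring

lemma persp (H : ℝ → ℝ) (hH : ConvexOn ℝ (Set.Ioi 0) H) (u s t θ : ℝ)
    (hu : 0 < u) (hs : 0 < s) (ht : 0 < t) (hθ0 : 0 ≤ θ) (hθ1 : θ ≤ 1) :
    H (u / (θ * s + (1 - θ) * t)) * (θ * s + (1 - θ) * t)
      ≤ θ * (H (u / s) * s) + (1 - θ) * (H (u / t) * t) := by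
  have hp : 0 < θ * s + (1 - θ) * t := by
    rcases eq_or_lt_of_le hθ0 with h0 | h0
    · simp [← h0]; linarith
    · nlinarith
  set p := θ * s + (1 - θ) * t with hpdef
  have hl0 : 0 ≤ θ * s / p := div_nonneg (by positivity) hp.le
  have hm0 : 0 ≤ (1 - θ) * t / p := div_nonneg (by nlinarith) hp.le
  have hsum : θ * s / p + (1 - θ) * t / p = 1 := by field_simp; exact hpdef.symm
  have hcomb : (θ * s / p) • (u / s) + ((1 - θ) * t / p) • (u / t) = u / p := by
    simp only [smul_eq_mul]
    field_simp
    ring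
  have := hH.2 (Set.mem_Ioi.mpr (div_pos hu hs)) (Set.mem_Ioi.mpr (div_pos hu ht))
    hl0 hm0 hsum
  rw [hcomb] at this
  simp only [smul_eq_mul] at this
  have := mul_le_mul_of_nonneg_right this (le_of_lt hp)
  calc H (u / p) * p ≤ (θ * s / p * H (u / s) + (1 - θ) * t / p * H (u / t)) * p := this
    _ = θ * (H (u / s) * s) + (1 - θ) * (H (u / t) * t) := by field_simp

section AuxJConvex

lemma Pfun_congr' (M : ℕ) (h : ℝ) (F G : ℕ → ℝ) (hpt : ∀ i ≤ M, F i = G i) :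
    Pfun M h F = Pfun M h G := Pfun_congr M h F G hpt

lemma ipE_pfun (M : ℕ) (h : ℝ) (l g : ℕ → ℝ) :
    ipE M h l g = Pfun M h (fun i => l i * g i) := rfl

lemma cCoef_pos (M : ℕ) (h : ℝ) (hpos : 0 < h) (f : ℝ → ℝ) (hf : ∀ s : ℝ, 0 < s → 0 < f s)
    (X0 XM : ℝ) (u0 : ℕ → ℝ) (hu0 : ∀ i ≤ M, 0 < u0 i) (xn : ℕ → ℝ) (hxn : inQ M X0 XM xn)
    (hM : 2 ≤ M) :
    ∀ i ≤ M, 0 < cCoef M h f u0 xn i := by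
  intro i hi
  have hDt : 0 < DtOp M h xn i := by
    unfold DtOp
    split_ifs with h0 hM'
    · exact div_pos (sub_pos.2 (by simpa using hxn.2.2 1 le_rfl (by omega))) hpos
    · exact div_pos (sub_pos.2 (hxn.2.2 M (by omega) le_rfl)) hpos
    · have h1 : xn (i - 1) < xn i := hxn.2.2 i (by omega) hi
      have h2 : xn i < xn (i + 1) := by
        have := hxn.2.2 (i + 1) (by omega) (by omega)
        simpa using this
      exact div_pos (sub_pos.2 (lt_trans h1 h2)) (by positivity)
  have hui := hu0 i hi
  unfold cCoef
  exact div_pos (by positivity) (mul_pos hDt (hf _ (div_pos hui hDt)))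

lemma inQ_convex (M : ℕ) (X0 XM : ℝ) : Convex ℝ {l : ℕ → ℝ | inQ M X0 XM l} := by
  intro z hz w hw a b ha hb hab
  simp only [Set.mem_setOf_eq, inQ] at *
  refine ⟨?_, ?_, ?_⟩
  · simp only [Pi.add_apply, Pi.smul_apply, smul_eq_mul, hz.1, hw.1]
    linear_combination X0 * hab
  · simp only [Pi.add_apply, Pi.smul_apply, smul_eq_mul, hz.2.1, hw.2.1]
    linear_combination XM * hab
  · intro i h1 h2
    have hz' := hz.2.2 i h1 h2
    have hw' := hw.2.2 i h1 h2
    simp only [Pi.add_apply, Pi.smul_apply, smul_eq_mul]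
    rcases eq_or_lt_of_le ha with h0 | h0
    · have hb1 : b = 1 := by linarith
      rw [← h0, hb1]
      simpa using hw'
    · exact add_lt_add_of_lt_of_le (mul_lt_mul_of_pos_left hz' h0)
        (mul_le_mul_of_nonneg_left hw'.le hb)

lemma Jkey (M : ℕ) (hM : 2 ≤ M) (X0 XM : ℝ) (hX : X0 < XM)
    (h : ℝ) (hh : h = (XM - X0) / (M : ℝ)) (τ : ℝ) (hτ : 0 < τ)
    (H f Vc Ve Wc We : ℝ → ℝ)
    (hHconv : ConvexOn ℝ (Set.Ioi 0) H)
    (hf : ∀ s : ℝ, 0 < s → 0 < f s)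
    (hVcconv : ConvexOn ℝ Set.univ Vc)
    (hWcconv : ConvexOn ℝ Set.univ Wc)
    (u0 u0half : ℕ → ℝ)
    (hu0 : ∀ i ≤ M, 0 < u0 i)
    (hu0half : ∀ i, 1 ≤ i → i ≤ M → 0 < u0half i)
    (xn : ℕ → ℝ) (hxn : inQ M X0 XM xn)
    (θ : ℝ) (hθ0 : 0 ≤ θ) (hθ1 : θ ≤ 1)
    (z w : ℕ → ℝ) (hz : inQ M X0 XM z) (hw : inQ M X0 XM w) :
    Jfun M h τ H f Vc Ve Wc We u0 u0half xn (fun i => θ * z i + (1 - θ) * w i)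
      + θ * (1 - θ) * (1 / (2 * τ))
        * ipE M h (fun i => cCoef M h f u0 xn i * (z i - w i)) (fun i => z i - w i)
      ≤ θ * Jfun M h τ H f Vc Ve Wc We u0 u0half xn z
        + (1 - θ) * Jfun M h τ H f Vc Ve Wc We u0 u0half xn w := by
  have hMpos : (0:ℝ) < (M : ℝ) := by
    have : (0:ℕ) < M := by omega
    exact_mod_cast this
  have hpos : 0 < h := by rw [hh]; exact div_pos (by linarith) hMpos
  -- term 1 (quadratic) exact identity
  have hq : Pfun M h (fun i => cCoef M h f u0 xn i * (θ * z i + (1 - θ) * w i - xn i)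
        * (θ * z i + (1 - θ) * w i - xn i))
      = θ * Pfun M h (fun i => cCoef M h f u0 xn i * (z i - xn i) * (z i - xn i))
        + (1 - θ) * Pfun M h (fun i => cCoef M h f u0 xn i * (w i - xn i) * (w i - xn i))
        + (-(θ * (1 - θ))) * Pfun M h (fun i => cCoef M h f u0 xn i * (z i - w i) * (z i - w i)) := by
    rw [← Pfun_combo3]
    exact Pfun_congr M h _ _ (fun i _ => by ring)
  have h1 : 1 / (2 * τ) * Pfun M h (fun i => cCoef M h f u0 xn i * (θ * z i + (1 - θ) * w i - xn i)
        * (θ * z i + (1 - θ) * w i - xn i))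
        + θ * (1 - θ) * (1 / (2 * τ))
          * Pfun M h (fun i => cCoef M h f u0 xn i * (z i - w i) * (z i - w i))
      = θ * (1 / (2 * τ) * Pfun M h (fun i => cCoef M h f u0 xn i * (z i - xn i) * (z i - xn i)))
        + (1 - θ) * (1 / (2 * τ) * Pfun M h (fun i => cCoef M h f u0 xn i * (w i - xn i) * (w i - xn i))) := by
    rw [hq]; ring
  -- term 2 (entropy)
  have h2 : h * ∑ i ∈ Finset.Icc 1 M,
        H (u0half i / DhOp h (fun i => θ * z i + (1 - θ) * w i) i)
          * DhOp h (fun i => θ * z i + (1 - θ) * w i) i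
      ≤ θ * (h * ∑ i ∈ Finset.Icc 1 M, H (u0half i / DhOp h z i) * DhOp h z i)
        + (1 - θ) * (h * ∑ i ∈ Finset.Icc 1 M, H (u0half i / DhOp h w i) * DhOp h w i) := by
    rw [← sum_combo]
    apply mul_le_mul_of_nonneg_left _ hpos.le
    apply Finset.sum_le_sum
    intro i hi
    obtain ⟨hi1, hiM⟩ := Finset.mem_Icc.mp hi
    have hDz : 0 < DhOp h z i := div_pos (sub_pos.2 (hz.2.2 i hi1 hiM)) hpos
    have hDw : 0 < DhOp h w i := div_pos (sub_pos.2 (hw.2.2 i hi1 hiM)) hpos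
    have hD : DhOp h (fun i => θ * z i + (1 - θ) * w i) i
        = θ * DhOp h z i + (1 - θ) * DhOp h w i := by
      unfold DhOp; ring
    rw [hD]
    exact persp H hHconv (u0half i) _ _ θ (hu0half i hi1 hiM) hDz hDw hθ0 hθ1
  -- term 3 (confinement Vc)
  have h3 : Pfun M h (fun i => u0 i * Vc (θ * z i + (1 - θ) * w i))
      ≤ θ * Pfun M h (fun i => u0 i * Vc (z i)) + (1 - θ) * Pfun M h (fun i => u0 i * Vc (w i)) := by
    rw [← Pfun_combo]
    apply Pfun_le M h hpos.le
    intro i hi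
    have hv := hVcconv.2 (Set.mem_univ (z i)) (Set.mem_univ (w i)) hθ0 (sub_nonneg.2 hθ1) (by ring)
    simp only [smul_eq_mul] at hv
    calc u0 i * Vc (θ * z i + (1 - θ) * w i)
        ≤ u0 i * (θ * Vc (z i) + (1 - θ) * Vc (w i)) :=
          mul_le_mul_of_nonneg_left hv (hu0 i hi).le
      _ = θ * (u0 i * Vc (z i)) + (1 - θ) * (u0 i * Vc (w i)) := by ring
  -- term 4 (interaction Wc)
  have hS : ∀ i ≤ M, Shat M h Wc u0 (fun j => θ * z j + (1 - θ) * w j) i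
      ≤ θ * Shat M h Wc u0 z i + (1 - θ) * Shat M h Wc u0 w i := by
    intro i hi
    simp only [Shat, ipE_pfun]
    rw [← Pfun_combo]
    apply Pfun_le M h hpos.le
    intro j hj
    have hd : (θ * z i + (1 - θ) * w i) - (θ * z j + (1 - θ) * w j)
        = θ * (z i - z j) + (1 - θ) * (w i - w j) := by ring
    have hv := hWcconv.2 (Set.mem_univ (z i - z j)) (Set.mem_univ (w i - w j)) hθ0
      (sub_nonneg.2 hθ1) (by ring)
    simp only [smul_eq_mul] at hv
    simp only [hd]
    calc Wc (θ * (z i - z j) + (1 - θ) * (w i - w j)) * u0 j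
        ≤ (θ * Wc (z i - z j) + (1 - θ) * Wc (w i - w j)) * u0 j :=
          mul_le_mul_of_nonneg_right hv (hu0 j hj).le
      _ = θ * (Wc (z i - z j) * u0 j) + (1 - θ) * (Wc (w i - w j) * u0 j) := by ring
  have h4 : Pfun M h (fun i => u0 i * Shat M h Wc u0 (fun j => θ * z j + (1 - θ) * w j) i)
      ≤ θ * Pfun M h (fun i => u0 i * Shat M h Wc u0 z i)
        + (1 - θ) * Pfun M h (fun i => u0 i * Shat M h Wc u0 w i) := by
    rw [← Pfun_combo]
    apply Pfun_le M h hpos.le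
    intro i hi
    calc u0 i * Shat M h Wc u0 (fun j => θ * z j + (1 - θ) * w j) i
        ≤ u0 i * (θ * Shat M h Wc u0 z i + (1 - θ) * Shat M h Wc u0 w i) :=
          mul_le_mul_of_nonneg_left (hS i hi) (hu0 i hi).le
      _ = θ * (u0 i * Shat M h Wc u0 z i) + (1 - θ) * (u0 i * Shat M h Wc u0 w i) := by ring
  -- term 5 (linear Ve part)
  have h5 : Pfun M h (fun i => u0 i * deriv Ve (xn i) * (θ * z i + (1 - θ) * w i))
      = θ * Pfun M h (fun i => u0 i * deriv Ve (xn i) * z i)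
        + (1 - θ) * Pfun M h (fun i => u0 i * deriv Ve (xn i) * w i) := by
    rw [← Pfun_combo]
    exact Pfun_congr M h _ _ (fun i _ => by ring)
  -- term 6 (linear We part)
  have h6 : Pfun M h (fun i => u0 i * Shat M h (deriv We) u0 xn i * (θ * z i + (1 - θ) * w i))
      = θ * Pfun M h (fun i => u0 i * Shat M h (deriv We) u0 xn i * z i)
        + (1 - θ) * Pfun M h (fun i => u0 i * Shat M h (deriv We) u0 xn i * w i) := by
    rw [← Pfun_combo]
    exact Pfun_congr M h _ _ (fun i _ => by ring)
  simp only [Jfun, ipE_pfun]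
  ring_nf
  ring_nf at h1 h2 h3 h4 h5 h6
  linarith

end AuxJConvex

/-- The functional `J` is convex on `Q` and strictly convex on `Q`
(strictness with respect to the components `0, …, M`). -/
theorem Jfun_convex_strictConvex
    (M : ℕ) (hM : 2 ≤ M) (X0 XM : ℝ) (hX : X0 < XM)
    (h : ℝ) (hh : h = (XM - X0) / (M : ℝ)) (τ : ℝ) (hτ : 0 < τ)
    (H f Vc Ve Wc We : ℝ → ℝ)
    (hHconv : ConvexOn ℝ (Set.Ioi 0) H) (hHreg : ContDiffOn ℝ 1 H (Set.Ioi 0))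
    (hf : ∀ s : ℝ, 0 < s → 0 < f s)
    (hVcconv : ConvexOn ℝ Set.univ Vc) (hVcreg : ContDiff ℝ 1 Vc)
    (hVeconv : ConvexOn ℝ Set.univ Ve) (hVereg : ContDiff ℝ 1 Ve)
    (hWcconv : ConvexOn ℝ Set.univ Wc) (hWcreg : ContDiff ℝ 1 Wc)
    (hWeconv : ConvexOn ℝ Set.univ We) (hWereg : ContDiff ℝ 1 We)
    (hWceven : ∀ s : ℝ, Wc (-s) = Wc s) (hWeeven : ∀ s : ℝ, We (-s) = We s)
    (u0 u0half : ℕ → ℝ)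
    (hu0 : ∀ i ≤ M, 0 < u0 i)
    (hu0half : ∀ i, 1 ≤ i → i ≤ M → 0 < u0half i)
    (xn : ℕ → ℝ) (hxn : inQ M X0 XM xn) :
    ConvexOn ℝ {l : ℕ → ℝ | inQ M X0 XM l} (Jfun M h τ H f Vc Ve Wc We u0 u0half xn)
    ∧ ∀ z w : ℕ → ℝ, inQ M X0 XM z → inQ M X0 XM w → (∃ i ≤ M, z i ≠ w i) →
        ∀ θ : ℝ, 0 < θ → θ < 1 →
          Jfun M h τ H f Vc Ve Wc We u0 u0half xn (fun i => θ * z i + (1 - θ) * w i)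
            < θ * Jfun M h τ H f Vc Ve Wc We u0 u0half xn z
              + (1 - θ) * Jfun M h τ H f Vc Ve Wc We u0 u0half xn w := by
  have hMpos : (0:ℝ) < (M : ℝ) := by
    have : (0:ℕ) < M := by omega
    exact_mod_cast this
  have hpos : 0 < h := by rw [hh]; exact div_pos (by linarith) hMpos
  have hc := cCoef_pos M h hpos f hf X0 XM u0 hu0 xn hxn hM
  constructor
  · refine ⟨inQ_convex M X0 XM, ?_⟩
    intro z hz w hw a b ha hb hab
    have hb' : b = 1 - a := by linarith
    subst hb'
    have hzu : a • z + (1 - a) • w = fun i => a * z i + (1 - a) * w i := by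
      funext i; simp [smul_eq_mul]
    rw [hzu]
    simp only [smul_eq_mul]
    have key := Jkey M hM X0 XM hX h hh τ hτ H f Vc Ve Wc We hHconv hf hVcconv hWcconv
      u0 u0half hu0 hu0half xn hxn a ha (by linarith) z w hz hw
    have hR : 0 ≤ ipE M h (fun i => cCoef M h f u0 xn i * (z i - w i)) (fun i => z i - w i) := by
      rw [ipE_pfun, ← Pfun_zero M h]
      apply Pfun_le M h hpos.le
      intro i hi
      show (0:ℝ) ≤ cCoef M h f u0 xn i * (z i - w i) * (z i - w i)
      rw [mul_assoc]
      exact mul_nonneg (hc i hi).le (mul_self_nonneg _)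
    have hnn : 0 ≤ a * (1 - a) * (1 / (2 * τ))
        * ipE M h (fun i => cCoef M h f u0 xn i * (z i - w i)) (fun i => z i - w i) :=
      mul_nonneg (mul_nonneg (mul_nonneg ha (by linarith)) (by positivity)) hR
    linarith
  · intro z w hz hw hex θ hθ0 hθ1
    obtain ⟨i, hiM, hne⟩ := hex
    have key := Jkey M hM X0 XM hX h hh τ hτ H f Vc Ve Wc We hHconv hf hVcconv hWcconv
      u0 u0half hu0 hu0half xn hxn θ hθ0.le hθ1.le z w hz hw
    have hi0 : i ≠ 0 := fun e => hne (by rw [e, hz.1, hw.1])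
    have hiM' : i ≠ M := fun e => hne (by rw [e, hz.2.1, hw.2.1])
    have hk : i ∈ Finset.Ioo 0 M :=
      Finset.mem_Ioo.mpr ⟨Nat.pos_of_ne_zero hi0, lt_of_le_of_ne hiM hiM'⟩
    have hR : 0 < ipE M h (fun i => cCoef M h f u0 xn i * (z i - w i)) (fun i => z i - w i) := by
      rw [ipE_pfun]
      have hlt := Pfun_lt M h hpos (fun _ => 0)
        (fun j => cCoef M h f u0 xn j * (z j - w j) * (z j - w j))
        (fun j hj => by
          show (0:ℝ) ≤ cCoef M h f u0 xn j * (z j - w j) * (z j - w j)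
          rw [mul_assoc]
          exact mul_nonneg (hc j hj).le (mul_self_nonneg _)) i hk
        (by
          show (0:ℝ) < cCoef M h f u0 xn i * (z i - w i) * (z i - w i)
          rw [mul_assoc]
          exact mul_pos (hc i hiM) (mul_self_pos.mpr (sub_ne_zero.mpr hne)))
      rw [Pfun_zero] at hlt
      exact hlt
    have hp : 0 < θ * (1 - θ) * (1 / (2 * τ))
        * ipE M h (fun i => cCoef M h f u0 xn i * (z i - w i)) (fun i => z i - w i) :=
      mul_pos (mul_pos (mul_pos hθ0 (by linarith)) (by positivity)) hR
    linarith
end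
end
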